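/- For every integer k ≥ 2, the polynomial Ψ_k(x) = x^k − x^(k−1) − ... − x − 1 has exactly one root (counted among all complex roots) of absolute value greater than 1; all other roots lie strictly inside the unit circle. -/

import Mathlib

open Finset Set

private noncomputable def Fm (m : ℕ) : ℝ → ℝ := fun t => 2 * t ^ (m + 2) - t ^ (m + 3)

private lemma Fm_hasDerivAt (m : ℕ) (t : ℝ) :
    HasDerivAt (Fm m) (t ^ (m + 1) * (2 * (m + 2) - (m + 3) * t)) t := by
  have h1 := ((hasDerivAt_pow (m + 2) t).const_mul (2 : ℝ)).sub (hasDerivAt_pow (m + 3) t)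
  refine h1.congr_deriv ?_
  have e1 : m + 2 - 1 = m + 1 := rfl
  have e2 : m + 3 - 1 = m + 2 := rfl
  rw [e1, e2]
  push_cast
  ring

private lemma Fm_cont (m : ℕ) : Continuous (Fm m) := by
  unfold Fm; continuity

private lemma Fm_mono (m : ℕ) :
    StrictMonoOn (Fm m) (Icc 1 (2 * (m + 2 : ℝ) / (m + 3))) := by
  apply strictMonoOn_of_deriv_pos (convex_Icc _ _) (Fm_cont m).continuousOn
  intro t ht
  rw [interior_Icc] at ht
  rw [(Fm_hasDerivAt m t).deriv]
  have h0 : (0:ℝ) < t := lt_trans one_pos ht.1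
  have h2 : t * (m + 3 : ℝ) < 2 * (m + 2) := by
    have := (lt_div_iff₀ (by positivity : (0:ℝ) < (m:ℝ) + 3)).mp ht.2
    linarith
  have : (0:ℝ) < 2 * (m + 2) - (m + 3) * t := by linarith
  positivity

private lemma Fm_anti (m : ℕ) :
    StrictAntiOn (Fm m) (Ici (2 * (m + 2 : ℝ) / (m + 3))) := by
  apply strictAntiOn_of_deriv_neg (convex_Ici _) (Fm_cont m).continuousOn
  intro t ht
  rw [interior_Ici] at ht
  rw [(Fm_hasDerivAt m t).deriv]
  have hc1 : (1:ℝ) ≤ 2 * (m + 2 : ℝ) / (m + 3) := by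
    rw [le_div_iff₀ (by positivity : (0:ℝ) < (m:ℝ) + 3)]
    push_cast; linarith
  have h0 : (0:ℝ) < t := lt_of_lt_of_le one_pos (le_of_lt (lt_of_le_of_lt hc1 ht))
  have h2 : 2 * ((m:ℝ) + 2) < t * (m + 3) := by
    have := (div_lt_iff₀ (by positivity : (0:ℝ) < (m:ℝ) + 3)).mp ht
    linarith
  have hp : (0:ℝ) < t ^ (m + 1) := by positivity
  nlinarith [hp]

private lemma point_eq (x y s : ℝ)
    (h1 : (2 - x) * (2 - x) + (0 - y) * (0 - y) = (2 - s) ^ 2)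
    (h2 : x * x + y * y = s ^ 2) : x = s ∧ y = 0 := by
  have hx : x = s := by nlinarith
  refine ⟨hx, ?_⟩
  have : y * y = 0 := by nlinarith
  exact mul_self_eq_zero.mp this

theorem psi_dominant_root (k : ℕ) (hk : 2 ≤ k) :
    ∃ α : ℂ, (α ^ k = ∑ i ∈ Finset.range k, α ^ i) ∧ 1 < ‖α‖ ∧
      ∀ z : ℂ, z ^ k = ∑ i ∈ Finset.range k, z ^ i → z ≠ α → ‖z‖ < 1 := by
  obtain ⟨m, rfl⟩ : ∃ m, k = m + 2 := ⟨k - 2, by omega⟩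
  set k := m + 2 with hkdef
  set c : ℝ := 2 * (m + 2 : ℝ) / (m + 3) with hc
  have hc1 : (1:ℝ) ≤ c := by
    rw [hc, le_div_iff₀ (by positivity : (0:ℝ) < (m:ℝ) + 3)]
    push_cast; linarith
  -- existence of real root α ∈ (1,2)
  have hcont : ContinuousOn (fun t : ℝ => t ^ k - ∑ i ∈ range k, t ^ i) (Icc 1 2) := by
    apply Continuous.continuousOn
    exact (continuous_pow k).sub (continuous_finset_sum _ fun i _ => continuous_pow i)
  have hIVT := intermediate_value_Ioo (by norm_num : (1:ℝ) ≤ 2) hcont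
  have hf1 : (fun t : ℝ => t ^ k - ∑ i ∈ range k, t ^ i) 1 = 1 - k := by
    simp [Finset.sum_const, Finset.card_range]
  have hf2 : (fun t : ℝ => t ^ k - ∑ i ∈ range k, t ^ i) 2 = 1 := by
    have hg : (∑ i ∈ range k, (2:ℝ) ^ i) * (2 - 1) = 2 ^ k - 1 := geom_sum_mul 2 k
    simp only
    nlinarith [hg]
  have h0mem : (0:ℝ) ∈ Ioo ((fun t : ℝ => t ^ k - ∑ i ∈ range k, t ^ i) 1)
      ((fun t : ℝ => t ^ k - ∑ i ∈ range k, t ^ i) 2) := by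
    rw [hf1, hf2]
    constructor
    · have : (2:ℝ) ≤ (k:ℝ) := by exact_mod_cast hk
      linarith
    · norm_num
  obtain ⟨α, hαmem, hαroot⟩ := hIVT h0mem
  have hα1 : (1:ℝ) < α := hαmem.1
  have hα2 : α < 2 := hαmem.2
  have hαeq : α ^ k = ∑ i ∈ range k, α ^ i := by
    have := hαroot; simp only at this; linarith
  -- ψ(α) = 1
  have hgeomα : (∑ i ∈ range k, α ^ i) * (α - 1) = α ^ k - 1 := geom_sum_mul α k
  have hFα : Fm m α = 1 := by
    have h1 : α ^ k * (α - 1) = α ^ k - 1 := by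
      linear_combination (α - 1) * hαeq + hgeomα
    have hpow : α ^ (m + 3) = α ^ k * α := by rw [hkdef]; ring
    unfold Fm
    have : α ^ k * α - α ^ k = α ^ k - 1 := by nlinarith [h1]
    rw [hpow]; show 2 * α ^ k - α ^ k * α = 1; linarith
  -- α > c
  have hαc : c < α := by
    by_contra hle
    push_neg at hle
    have h1mem : (1:ℝ) ∈ Icc 1 c := ⟨le_refl _, hc1⟩
    have hαmem' : α ∈ Icc (1:ℝ) c := ⟨le_of_lt hα1, hle⟩
    have := Fm_mono m h1mem hαmem' hα1
    have hF1 : Fm m 1 = 1 := by unfold Fm; norm_num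
    rw [hF1, hFα] at this
    exact lt_irrefl _ this
  -- cast root to ℂ
  refine ⟨(α : ℂ), ?_, ?_, ?_⟩
  · have := congrArg (Complex.ofReal) hαeq
    push_cast at this
    exact this
  · rw [Complex.norm_real, Real.norm_eq_abs, abs_of_pos (by linarith)]
    exact hα1
  · intro z hz hzα
    by_contra hcon
    push_neg at hcon
    set t : ℝ := ‖z‖ with ht
    have ht1 : (1:ℝ) ≤ t := hcon
    have ht0 : (0:ℝ) < t := lt_of_lt_of_le one_pos ht1
    -- z ≠ 1
    have hz1 : z ≠ 1 := by
      intro h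
      rw [h] at hz
      simp [Finset.sum_const, Finset.card_range] at hz
      have : (k:ℂ) = 1 := hz.symm
      have : (k:ℕ) = 1 := by exact_mod_cast this
      omega
    -- z^k (2 - z) = 1
    have hgeomz : (∑ i ∈ range k, z ^ i) * (z - 1) = z ^ k - 1 := geom_sum_mul z k
    have hE : z ^ k * (2 - z) = 1 := by
      have h1 : z ^ k * (z - 1) = z ^ k - 1 := by
        linear_combination (z - 1) * hz + hgeomz
      linear_combination -h1
    -- t^k * |2 - z| = 1
    have habsE : t ^ k * ‖2 - z‖ = 1 := by
      have := congrArg norm hE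
      rw [norm_mul, norm_pow] at this
      simpa using this
    -- |2 - z| ≥ 2 - t
    have hsub : 2 - t ≤ ‖2 - z‖ := by
      have := norm_sub_norm_le (2:ℂ) z
      have h2 : ‖(2:ℂ)‖ = 2 := by norm_num
      rw [h2] at this
      exact this
    -- ψ(t) ≤ 1
    have hψle : Fm m t ≤ 1 := by
      have hpk : (0:ℝ) ≤ t ^ k := by positivity
      have : t ^ k * (2 - t) ≤ t ^ k * ‖2 - z‖ :=
        mul_le_mul_of_nonneg_left hsub hpk
      rw [habsE] at this
      unfold Fm
      have hpow : t ^ (m + 3) = t ^ k * t := by rw [hkdef]; ring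
      rw [hpow]
      show 2 * t ^ k - t ^ k * t ≤ 1
      nlinarith [this]
    -- t^k ≤ ∑ t^i
    have htri : t ^ k ≤ ∑ i ∈ range k, t ^ i := by
      have h1 : ‖z ^ k‖ ≤ ∑ i ∈ range k, ‖z ^ i‖ := by
        rw [hz]
        simpa using norm_sum_le (range k) (fun i => z ^ i)
      rw [norm_pow] at h1
      calc t ^ k ≤ ∑ i ∈ range k, ‖z ^ i‖ := h1
        _ = ∑ i ∈ range k, t ^ i := by
            apply Finset.sum_congr rfl
            intro i _
            rw [norm_pow]
    -- ψ(t) ≥ 1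
    have hψge : 1 ≤ Fm m t := by
      have hgeomt : (∑ i ∈ range k, t ^ i) * (t - 1) = t ^ k - 1 := geom_sum_mul t k
      have h1 : t ^ k * (t - 1) ≤ t ^ k - 1 := by
        rw [← hgeomt]
        apply mul_le_mul_of_nonneg_right htri
        linarith
      unfold Fm
      have hpow : t ^ (m + 3) = t ^ k * t := by rw [hkdef]; ring
      rw [hpow]
      show 1 ≤ 2 * t ^ k - t ^ k * t
      nlinarith [h1]
    have hψeq : Fm m t = 1 := le_antisymm hψle hψge
    -- helper: |2-z| = 2-t implies z is real and equals t
    have hzofabs : ‖2 - z‖ = 2 - t → z = (t : ℂ) := by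
      intro habs2z
      have h1 : Complex.normSq (2 - z) = (2 - t) ^ 2 := by
        have := Complex.sq_norm (2 - z)
        rw [habs2z] at this
        linarith [this]
      have h2 : Complex.normSq z = t ^ 2 := by
        have := Complex.sq_norm z
        rw [← ht] at this
        linarith [this]
      rw [Complex.normSq_apply] at h1 h2
      simp only [Complex.sub_re, Complex.sub_im] at h1
      have hre2 : Complex.re (2:ℂ) = 2 := by norm_num
      have him2 : Complex.im (2:ℂ) = 0 := by norm_num
      rw [hre2, him2] at h1
      obtain ⟨hre, him⟩ := point_eq z.re z.im t h1 h2
      apply Complex.ext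
      · simp [hre]
      · simp [him]
    rcases eq_or_lt_of_le ht1 with heq | hlt
    · -- t = 1 : then |2-z| = 1 = 2-t, so z = 1, contradiction
      have htk : t ^ k = 1 := by rw [← heq]; simp
      rw [htk, one_mul] at habsE
      have hzr := hzofabs (by rw [habsE, ← heq]; norm_num)
      apply hz1
      rw [hzr, ← heq]
      norm_num
    · -- t > 1 : t = α
      have htc : c < t := by
        by_contra hle
        push_neg at hle
        have h1mem : (1:ℝ) ∈ Icc 1 c := ⟨le_refl _, hc1⟩
        have htmem : t ∈ Icc (1:ℝ) c := ⟨ht1, hle⟩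
        have := Fm_mono m h1mem htmem hlt
        have hF1 : Fm m 1 = 1 := by unfold Fm; norm_num
        rw [hF1, hψeq] at this
        exact lt_irrefl _ this
      have hteqα : t = α :=
        (Fm_anti m).injOn (le_of_lt htc) (le_of_lt hαc) (by rw [hψeq, hFα])
      have hFt : t ^ k * (2 - t) = 1 := by
        have hpow : t ^ (m + 3) = t ^ k * t := by rw [hkdef]; ring
        unfold Fm at hψeq
        rw [hpow] at hψeq
        nlinarith [hψeq]
      have hpk : (0:ℝ) < t ^ k := by positivity
      have habs2z : ‖2 - z‖ = 2 - t := by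
        have : t ^ k * ‖2 - z‖ = t ^ k * (2 - t) := by rw [habsE, hFt]
        exact mul_left_cancel₀ (ne_of_gt hpk) this
      have hzr := hzofabs habs2z
      apply hzα
      rw [hzr, hteqα]
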